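/- The stacked path R₂ has no 4-lettering in which s(1,1) and s(2,1) are encoded by the same letter, c(1,1) and c(2,1) are encoded by the same letter, c(1,2) and c(2,2) are encoded by the same letter, and s(1,2) and s(2,2) are encoded by the same letter. -/

import Mathlib

/-- The stacked path `Rₙ`: `Sum.inl (i, j)` is the clique vertex `c(i+1, j+1)` and
`Sum.inr (i, j)` is the independent-set vertex `s(i+1, j+1)`; the `c`-vertices form a
clique, the `s`-vertices form an independent set, and `s(u₁,v₁) ~ c(u₂,v₂)` iff
`u₁ > u₂` or (`u₁ = u₂` and `v₁ = v₂`). -/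
def stackedPath (n : ℕ) : SimpleGraph ((Fin n × Fin 2) ⊕ (Fin n × Fin 2)) where
  Adj a b :=
    match a, b with
    | Sum.inl c₁, Sum.inl c₂ => c₁ ≠ c₂
    | Sum.inl c, Sum.inr s => c.1 < s.1 ∨ (s.1 = c.1 ∧ s.2 = c.2)
    | Sum.inr s, Sum.inl c => c.1 < s.1 ∨ (s.1 = c.1 ∧ s.2 = c.2)
    | Sum.inr _, Sum.inr _ => False
  symm := by constructor; rintro (a | a) (b | b) h <;> first | exact h.symm | exact h
  loopless := by
    constructor
    rintro (a | a) h
    · exact h rfl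
    · exact h

instance stackedPathDecidableAdj (n : ℕ) : DecidableRel (stackedPath n).Adj := fun a b =>
  match a, b with
  | Sum.inl c₁, Sum.inl c₂ => inferInstanceAs (Decidable (c₁ ≠ c₂))
  | Sum.inl c, Sum.inr s => inferInstanceAs (Decidable (c.1 < s.1 ∨ (s.1 = c.1 ∧ s.2 = c.2)))
  | Sum.inr s, Sum.inl c => inferInstanceAs (Decidable (c.1 < s.1 ∨ (s.1 = c.1 ∧ s.2 = c.2)))
  | Sum.inr _, Sum.inr _ => inferInstanceAs (Decidable False)


private lemma chainA {s0 c0 s1 c1 : ℕ} (I1 : s0 < c0 ↔ c1 < s0) (I2 : s1 < c0 ↔ c1 < s0)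
    (I3 : s1 < c1 ↔ c1 < s0) (n1 : s0 ≠ c0) (n2 : s0 ≠ c1) (n3 : s1 ≠ c0) (n4 : s1 ≠ c1) :
    (s1 < c1 ∧ c1 < s0 ∧ s0 < c0) ∨ (c0 < s0 ∧ s0 < c1 ∧ c1 < s1) := by omega

private lemma chainB {a b c d : ℕ} (I1 : a < b ↔ b < c) (I2 : a < b ↔ d < c)
    (I3 : a < b ↔ d < a) (n1 : a ≠ b) (n2 : b ≠ c) (n3 : c ≠ d) (n4 : a ≠ d) :
    (d < a ∧ a < b ∧ b < c) ∨ (c < b ∧ b < a ∧ a < d) := by omega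

private lemma noChains {S00 C00 S10 C10 S01 C01 S11 C11 : ℕ}
    (hAB : (S10 < C10 ∧ C10 < S00 ∧ S00 < C00) ∨ (C00 < S00 ∧ S00 < C10 ∧ C10 < S10))
    (hED : (S11 < C11 ∧ C11 < S01 ∧ S01 < C01) ∨ (C01 < S01 ∧ S01 < C11 ∧ C11 < S11))
    (hAD : (C11 < S10 ∧ S10 < C01 ∧ C01 < S00) ∨ (S00 < C01 ∧ C01 < S10 ∧ S10 < C11))
    (hEB : (C10 < S11 ∧ S11 < C00 ∧ C00 < S01) ∨ (S01 < C00 ∧ C00 < S11 ∧ S11 < C10)) :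
    False := by omega

set_option maxHeartbeats 2000000

/-- The stacked path `R₂` has no `4`-lettering in which `s(1,1), s(2,1)` get the
same letter, `c(1,1), c(2,1)` get the same letter, `c(1,2), c(2,2)` get the same
letter, and `s(1,2), s(2,2)` get the same letter. -/
theorem stackedPath_two_no_uniform_lettering :
    ¬ ∃ (D : Set (Fin 4 × Fin 4)) (L : (Fin 2 × Fin 2) ⊕ (Fin 2 × Fin 2) → Fin 4)
      (ord : (Fin 2 × Fin 2) ⊕ (Fin 2 × Fin 2) → ℕ),
      Function.Injective ord ∧
      (∀ u v, u ≠ v → ord u < ord v → ((stackedPath 2).Adj u v ↔ (L u, L v) ∈ D)) ∧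
      L (Sum.inr (0, 0)) = L (Sum.inr (1, 0)) ∧
      L (Sum.inl (0, 0)) = L (Sum.inl (1, 0)) ∧
      L (Sum.inl (0, 1)) = L (Sum.inl (1, 1)) ∧
      L (Sum.inr (0, 1)) = L (Sum.inr (1, 1)) := by
  rintro ⟨D, L, ord, hinj, hcond, h1, h2, h3, h4⟩
  -- key lemma: an adjacent pair and a non-adjacent pair with the same letters
  -- must be ordered in opposite directions
  have key : ∀ u v u' v' : (Fin 2 × Fin 2) ⊕ (Fin 2 × Fin 2),
      (stackedPath 2).Adj u v → ¬ (stackedPath 2).Adj u' v' → u' ≠ v' →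
      L u = L u' → L v = L v' → (ord u < ord v ↔ ord v' < ord u') := by
    intro u v u' v' hadj hnadj hne hLu hLv
    have huv : u ≠ v := hadj.ne
    constructor
    · intro h
      have hD : (L u, L v) ∈ D := (hcond u v huv h).mp hadj
      rw [hLu, hLv] at hD
      rcases lt_trichotomy (ord u') (ord v') with h' | h' | h'
      · exact absurd ((hcond u' v' hne h').mpr hD) hnadj
      · exact absurd (hinj h') hne
      · exact h'
    · intro h
      have hD' : (L v', L u') ∉ D := fun hm => hnadj ((hcond v' u' (Ne.symm hne) h).mpr hm).symm
      rcases lt_trichotomy (ord u) (ord v) with h' | h' | h'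
      · exact h'
      · exact absurd (hinj h') huv
      · have hD : (L v, L u) ∈ D := (hcond v u (Ne.symm huv) h').mp hadj.symm
        rw [hLu, hLv] at hD
        exact absurd hD hD'
  have nediff : ∀ u v : (Fin 2 × Fin 2) ⊕ (Fin 2 × Fin 2),
      u ≠ v → ord u ≠ ord v := fun u v h hh => h (hinj hh)
  -- class (a,b) : s(·,0) against c(·,0); non-adjacent pair (s00, c10)
  have I1 := key (Sum.inr (0,0)) (Sum.inl (0,0)) (Sum.inr (0,0)) (Sum.inl (1,0))
    (by decide) (by decide) (by decide) rfl h2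
  have I2 := key (Sum.inr (1,0)) (Sum.inl (0,0)) (Sum.inr (0,0)) (Sum.inl (1,0))
    (by decide) (by decide) (by decide) h1.symm h2
  have I3 := key (Sum.inr (1,0)) (Sum.inl (1,0)) (Sum.inr (0,0)) (Sum.inl (1,0))
    (by decide) (by decide) (by decide) h1.symm rfl
  -- class (e,d) : s(·,1) against c(·,1); non-adjacent pair (s01, c11)
  have I4 := key (Sum.inr (0,1)) (Sum.inl (0,1)) (Sum.inr (0,1)) (Sum.inl (1,1))
    (by decide) (by decide) (by decide) rfl h3
  have I5 := key (Sum.inr (1,1)) (Sum.inl (0,1)) (Sum.inr (0,1)) (Sum.inl (1,1))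
    (by decide) (by decide) (by decide) h4.symm h3
  have I6 := key (Sum.inr (1,1)) (Sum.inl (1,1)) (Sum.inr (0,1)) (Sum.inl (1,1))
    (by decide) (by decide) (by decide) h4.symm rfl
  -- class (a,d) : s(·,0) against c(·,1); adjacent pair (s10, c01)
  have I7 := key (Sum.inr (1,0)) (Sum.inl (0,1)) (Sum.inr (0,0)) (Sum.inl (0,1))
    (by decide) (by decide) (by decide) h1.symm rfl
  have I8 := key (Sum.inr (1,0)) (Sum.inl (0,1)) (Sum.inr (0,0)) (Sum.inl (1,1))
    (by decide) (by decide) (by decide) h1.symm h3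
  have I9 := key (Sum.inr (1,0)) (Sum.inl (0,1)) (Sum.inr (1,0)) (Sum.inl (1,1))
    (by decide) (by decide) (by decide) rfl h3
  -- class (e,b) : s(·,1) against c(·,0); adjacent pair (s11, c00)
  have I10 := key (Sum.inr (1,1)) (Sum.inl (0,0)) (Sum.inr (0,1)) (Sum.inl (0,0))
    (by decide) (by decide) (by decide) h4.symm rfl
  have I11 := key (Sum.inr (1,1)) (Sum.inl (0,0)) (Sum.inr (0,1)) (Sum.inl (1,0))
    (by decide) (by decide) (by decide) h4.symm h2
  have I12 := key (Sum.inr (1,1)) (Sum.inl (0,0)) (Sum.inr (1,1)) (Sum.inl (1,0))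
    (by decide) (by decide) (by decide) rfl h2
  -- distinctness of the relevant orders
  have n1 := nediff (Sum.inr (0,0)) (Sum.inl (0,0)) (by decide)
  have n2 := nediff (Sum.inr (0,0)) (Sum.inl (1,0)) (by decide)
  have n3 := nediff (Sum.inr (1,0)) (Sum.inl (0,0)) (by decide)
  have n4 := nediff (Sum.inr (1,0)) (Sum.inl (1,0)) (by decide)
  have n5 := nediff (Sum.inr (0,1)) (Sum.inl (0,1)) (by decide)
  have n6 := nediff (Sum.inr (0,1)) (Sum.inl (1,1)) (by decide)
  have n7 := nediff (Sum.inr (1,1)) (Sum.inl (0,1)) (by decide)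
  have n8 := nediff (Sum.inr (1,1)) (Sum.inl (1,1)) (by decide)
  have n9 := nediff (Sum.inr (1,0)) (Sum.inl (0,1)) (by decide)
  have n10 := nediff (Sum.inr (0,0)) (Sum.inl (0,1)) (by decide)
  have n11 := nediff (Sum.inr (0,0)) (Sum.inl (1,1)) (by decide)
  have n12 := nediff (Sum.inr (1,0)) (Sum.inl (1,1)) (by decide)
  have n13 := nediff (Sum.inr (1,1)) (Sum.inl (0,0)) (by decide)
  have n14 := nediff (Sum.inr (0,1)) (Sum.inl (0,0)) (by decide)
  have n15 := nediff (Sum.inr (0,1)) (Sum.inl (1,0)) (by decide)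
  have n16 := nediff (Sum.inr (1,1)) (Sum.inl (1,0)) (by decide)
  exact noChains (chainA I1 I2 I3 n1 n2 n3 n4) (chainA I4 I5 I6 n5 n6 n7 n8)
    (chainB I7 I8 I9 n9 n10.symm n11 n12) (chainB I10 I11 I12 n13 n14.symm n15 n16)
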